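/- Let $(R,\mathfrak{m})$ be a Noetherian local ring and let $M$ be an $R$-module that is complete in the $\mathfrak{m}$-adic topology. Let $x \in \mathfrak{m}$ be a nonzerodivisor on both $R$ and $M$, and let $0 \to T \to F \to M \to 0$ be an exact sequence of $R$-modules in which $F$ is a complete flat $R$-module. Then both $T$ and $T/xT$ are complete in their $\mathfrak{m}$-adic topologies. -/

import Mathlib

/- Background definitions: Ext and Tor groups of modules, the invariant `p^R(M,N)`,
the invariant `ξ(R)`, Gorenstein / regular / complete intersection local rings. -/

noncomputable section

open CategoryTheory Opposite IsLocalRing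

universe u

/-- The `i`-th Ext group `Ext^i_R(M,N)` of two `R`-modules, as an object of `ModuleCat R`. -/
abbrev ExtMod (R : Type u) [CommRing R] (M N : Type u) [AddCommGroup M] [Module R M]
    [AddCommGroup N] [Module R N] (i : ℕ) : ModuleCat.{u} R :=
  ((_root_.Ext R (ModuleCat.{u} R) i).obj (op (ModuleCat.of R M))).obj (ModuleCat.of R N)

/-- The `i`-th Tor group `Tor_i^R(M,N)` of two `R`-modules, as an object of `ModuleCat R`. -/
abbrev TorMod (R : Type u) [CommRing R] (M N : Type u) [AddCommGroup M] [Module R M]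
    [AddCommGroup N] [Module R N] (i : ℕ) : ModuleCat.{u} R :=
  ((Tor (ModuleCat.{u} R) i).obj (ModuleCat.of R M)).obj (ModuleCat.of R N)

/-- `p^R(M,N) = sup { i ∈ ℕ | Ext^i_R(M,N) ≠ 0 }`, as an extended natural number. -/
noncomputable def pExt (R : Type u) [CommRing R] (M N : Type u) [AddCommGroup M] [Module R M]
    [AddCommGroup N] [Module R N] : ℕ∞ :=
  sSup {n : ℕ∞ | ∃ i : ℕ, n = i ∧ Nontrivial (ExtMod R M N i)}

/-- `ξ(R)`: the supremum of the finite values of `p^R(M,N)` over pairs of nonzero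
`R`-modules `(M, N)` with `M` finitely generated and `N` arbitrary. -/
noncomputable def xi (R : Type u) [CommRing R] : ℕ∞ :=
  sSup {n : ℕ∞ | n ≠ ⊤ ∧ ∃ M N : ModuleCat.{u} R, Nontrivial M ∧ Nontrivial N ∧
    Module.Finite R M ∧ pExt R M N = n}

/-- `R` has injective dimension at most `n` as a module over itself: `Ext^i_R(M,R) = 0`
for every `R`-module `M` and every `i > n`. -/
def SelfInjDimLE (R : Type u) [CommRing R] (n : ℕ) : Prop :=
  ∀ (M : ModuleCat.{u} R) (i : ℕ), n < i → Subsingleton (ExtMod R M R i)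

/-- A Gorenstein local ring: a commutative Noetherian local ring of finite injective
dimension as a module over itself. -/
def IsGorensteinLocalRing (R : Type u) [CommRing R] : Prop :=
  IsNoetherianRing R ∧ IsLocalRing R ∧ ∃ n : ℕ, SelfInjDimLE R n

/-- A regular local ring: a commutative Noetherian local ring whose maximal ideal can be
generated by `dim R` elements. -/
def IsRegularLocalRing' (R : Type u) [CommRing R] : Prop :=
  IsNoetherianRing R ∧ ∃ _ : IsLocalRing R, ∃ s : Finset R,
    Ideal.span (s : Set R) = maximalIdeal R ∧ (s.card : WithBot ℕ∞) = ringKrullDim R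

/-- A complete intersection local ring: a commutative Noetherian local ring whose
`𝔪`-adic completion is the quotient of a regular local ring by an ideal generated by a
regular sequence. -/
def IsCompleteIntersectionLocalRing (R : Type u) [CommRing R] : Prop :=
  IsNoetherianRing R ∧ ∃ _ : IsLocalRing R, ∃ (Q : Type u) (_ : CommRing Q)
    (rs : List Q), IsRegularLocalRing' Q ∧ RingTheory.Sequence.IsRegular Q rs ∧
    Nonempty (AdicCompletion (maximalIdeal R) R ≃+* (Q ⧸ Ideal.span {x | x ∈ rs}))


/-! ### Auxiliary machinery for the proof of `complete_syzygy` -/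

namespace CompleteSyzygyAux

open Pointwise TensorProduct
open scoped TensorProduct

variable {R : Type*} [CommRing R] (I : Ideal R)
variable {N : Type*} [AddCommGroup N] [Module R N]

/-- Summability of `c`-adic geometric-type series in `N`:
for every sequence `b` there is a sequence of "tail sums" `a` with
`a n = b n + c • a (n+1)`. -/
def CanSum (c : R) (N : Type*) [AddCommGroup N] [Module R N] : Prop :=
  ∀ b : ℕ → N, ∃ a : ℕ → N, ∀ n, a n = b n + c • a (n + 1)

theorem geom_zero [IsHausdorff I N] {c : R} (hc : c ∈ I) {a : ℕ → N}
    (ha : ∀ n, a n = c • a (n + 1)) : ∀ n, a n = 0 := by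
  have key : ∀ n k, a n = c ^ k • a (n + k) := by
    intro n k
    induction k with
    | zero => simp
    | succ k ih =>
      rw [ih, ha (n + k), smul_smul, ← pow_succ, ← Nat.add_assoc]
  intro n
  refine IsHausdorff.haus ‹IsHausdorff I N› (a n) fun k => ?_
  rw [SModEq.zero, key n k]
  exact Submodule.smul_mem_smul (Ideal.pow_mem_pow hc k) Submodule.mem_top

theorem canSum_of_complete [IsAdicComplete I N] {c : R} (hc : c ∈ I) : CanSum c N := by
  intro b
  set p : ℕ → ℕ → N := fun n k => ∑ j ∈ Finset.range k, c ^ j • b (n + j) with hp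
  have hterm : ∀ n j m, m ≤ j → c ^ j • b (n + j) ∈ (I ^ m • ⊤ : Submodule R N) := by
    intro n j m hm
    exact Submodule.smul_mem_smul (Ideal.pow_le_pow_right hm (Ideal.pow_mem_pow hc j))
      Submodule.mem_top
  have hcauchy : ∀ n, ∀ {m k : ℕ}, m ≤ k →
      p n m ≡ p n k [SMOD (I ^ m • ⊤ : Submodule R N)] := by
    intro n m k h
    rw [SModEq.sub_mem]
    show (∑ j ∈ Finset.range m, c ^ j • b (n + j)) -
      (∑ j ∈ Finset.range k, c ^ j • b (n + j)) ∈ _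
    rw [← neg_sub, ← Finset.sum_Ico_eq_sub _ h]
    exact neg_mem (Submodule.sum_mem _ fun j hj => hterm n j m (Finset.mem_Ico.mp hj).1)
  have haux := fun n => IsPrecomplete.prec (IsAdicComplete.toIsPrecomplete (I := I) (M := N))
    (hcauchy n)
  choose a haa using haux
  refine ⟨a, fun n => ?_⟩
  rw [← sub_eq_zero]
  refine IsHausdorff.haus (IsAdicComplete.toIsHausdorff (I := I) (M := N)) _ fun k => ?_
  rw [SModEq.zero]
  have h1 : a n - p n (k + 1) ∈ (I ^ k • ⊤ : Submodule R N) := by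
    have := (haa n (k + 1)).symm
    rw [SModEq.sub_mem] at this
    exact Submodule.smul_mono_left (Ideal.pow_le_pow_right (Nat.le_succ k)) this
  have h2 : c • (a (n + 1) - p (n + 1) k) ∈ (I ^ k • ⊤ : Submodule R N) := by
    have := (haa (n + 1) k).symm
    rw [SModEq.sub_mem] at this
    exact Submodule.smul_mem _ c this
  have hsplit : p n (k + 1) = b n + c • p (n + 1) k := by
    show (∑ j ∈ Finset.range (k + 1), c ^ j • b (n + j)) = _
    rw [Finset.sum_range_succ']
    simp only [pow_zero, one_smul, Nat.add_zero]
    rw [add_comm, Finset.smul_sum]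
    congr 1
    refine Finset.sum_congr rfl fun j _ => ?_
    rw [show n + (j + 1) = n + 1 + j by omega, pow_succ', mul_smul]
  have heq : a n - (b n + c • a (n + 1)) =
      (a n - p n (k + 1)) - c • (a (n + 1) - p (n + 1) k) := by
    rw [smul_sub, hsplit]; abel
  rw [heq]
  exact sub_mem h1 h2

theorem canSum_exact {T F M : Type*} [AddCommGroup T] [Module R T] [AddCommGroup F] [Module R F]
    [AddCommGroup M] [Module R M] [IsHausdorff I M]
    (f : T →ₗ[R] F) (g : F →ₗ[R] M) (hf : Function.Injective f) (hfg : Function.Exact f g)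
    {c : R} (hc : c ∈ I) (hF : CanSum c F) : CanSum c T := by
  intro b
  obtain ⟨A, hA⟩ := hF fun n => f (b n)
  have hgA : ∀ n, g (A n) = c • g (A (n + 1)) := by
    intro n
    rw [hA n, map_add, map_smul, hfg.apply_apply_eq_zero, zero_add]
  have hgA0 := geom_zero I hc hgA
  choose a ha using fun n => (hfg (A n)).mp (hgA0 n)
  refine ⟨a, fun n => ?_⟩
  apply hf
  rw [map_add, map_smul, ha, ha, hA]

/-- Decomposition of elements of `(span {c} ⊔ B) ^ n • ⊤` into a polynomial in `c`
with coefficients in `B ^ (n - k) • ⊤`. -/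
theorem decomp (c : R) (B : Ideal R) :
    ∀ n, ∀ u ∈ ((Ideal.span {c} ⊔ B) ^ n • ⊤ : Submodule R N),
      ∃ v : ℕ → N, (∀ k, v k ∈ (B ^ (n - k) • ⊤ : Submodule R N)) ∧ (∀ k, n < k → v k = 0) ∧
        u = ∑ k ∈ Finset.range (n + 1), c ^ k • v k := by
  intro n
  induction n with
  | zero =>
    intro u _
    refine ⟨fun k => if k = 0 then u else 0, fun k => ?_, fun k hk => ?_, by simp⟩
    · dsimp only
      rcases Nat.eq_zero_or_pos k with h | h
      · simp [h]
      · rw [if_neg (by omega)]; exact Submodule.zero_mem _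
    · dsimp only
      rw [if_neg (by omega)]
  | succ n ihn =>
    intro u hu
    have hJ : ((Ideal.span {c} ⊔ B) ^ (n + 1) • ⊤ : Submodule R N) =
        (Ideal.span {c} ⊔ B) • ((Ideal.span {c} ⊔ B) ^ n • ⊤ : Submodule R N) := by
      rw [pow_succ', ← Ideal.smul_eq_mul, Submodule.smul_assoc]
    rw [hJ] at hu
    clear hJ
    refine Submodule.smul_induction_on hu ?_ ?_
    · intro r hr p hp
      obtain ⟨α, hα, β, hβ, rfl⟩ := Submodule.mem_sup.mp hr
      obtain ⟨γ, rfl⟩ := Ideal.mem_span_singleton'.mp hα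
      -- two parts
      obtain ⟨v1, hv1m, hv1z, hv1s⟩ := ihn (γ • p) (Submodule.smul_mem _ γ hp)
      obtain ⟨v2, hv2m, hv2z, hv2s⟩ := ihn p hp
      refine ⟨fun k => (if k = 0 then 0 else v1 (k - 1)) + β • v2 k, fun k => ?_, fun k hk => ?_, ?_⟩
      · refine add_mem ?_ ?_
        · cases k with
          | zero => simp
          | succ k =>
            simpa [Nat.succ_sub_succ, Nat.add_sub_cancel] using hv1m k
        · have h1 : β • v2 k ∈ (B • (B ^ (n - k) • ⊤) : Submodule R N) :=
            Submodule.smul_mem_smul hβ (hv2m k)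
          have h2 : (B • (B ^ (n - k) • ⊤) : Submodule R N) = B ^ (n - k + 1) • ⊤ := by
            rw [← Submodule.smul_assoc, Ideal.smul_eq_mul, ← pow_succ']
          rw [h2] at h1
          exact Submodule.smul_mono_left (Ideal.pow_le_pow_right (by omega)) h1
      · cases k with
        | zero => omega
        | succ k => simp [Nat.add_sub_cancel, hv1z k (by omega), hv2z (k+1) (by omega)]
      · have hsum1 : ∑ k ∈ Finset.range (n + 2), c ^ k • (if k = 0 then 0 else v1 (k - 1))
            = (γ * c) • p := by
          rw [Finset.sum_range_succ']
          simp only [Nat.succ_ne_zero, if_false, Nat.add_sub_cancel, eq_self_iff_true, if_true, smul_zero,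
            add_zero]
          rw [mul_comm γ c, mul_smul, hv1s, Finset.smul_sum]
          exact Finset.sum_congr rfl fun k _ => by rw [pow_succ', mul_smul]
        have hsum2 : ∑ k ∈ Finset.range (n + 2), c ^ k • (β • v2 k) = β • p := by
          rw [Finset.sum_range_succ, hv2z (n+1) (by omega), smul_zero, smul_zero, add_zero,
            hv2s, Finset.smul_sum]
          exact Finset.sum_congr rfl fun k _ => (smul_comm _ _ _)
        rw [add_smul, ← hsum1, ← hsum2, ← Finset.sum_add_distrib]
        exact Finset.sum_congr rfl fun k _ => by rw [smul_add]
    · intro u1 u2 ih1 ih2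
      obtain ⟨w1, hw1m, hw1z, hw1s⟩ := ih1
      obtain ⟨w2, hw2m, hw2z, hw2s⟩ := ih2
      refine ⟨w1 + w2, fun k => add_mem (hw1m k) (hw2m k), fun k hk => ?_, ?_⟩
      · simp [Pi.add_apply, hw1z k hk, hw2z k hk]
      · rw [hw1s, hw2s, ← Finset.sum_add_distrib]
        exact Finset.sum_congr rfl fun k _ => by simp [smul_add]


theorem exists_limit_of_list (s : List R) (hs : ∀ c ∈ s, CanSum c N)
    (w : ℕ → N) (hw : ∀ n, w n ∈ ((Ideal.span {y | y ∈ s}) ^ n • ⊤ : Submodule R N)) :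
    ∃ t : N, ∀ n, t - ∑ k ∈ Finset.range n, w k ∈
      ((Ideal.span {y | y ∈ s}) ^ n • ⊤ : Submodule R N) := by
  induction s generalizing w with
  | nil =>
    refine ⟨w 0, fun n => ?_⟩
    have hspan : Ideal.span {y : R | y ∈ ([] : List R)} = ⊥ := by
      rw [show {y : R | y ∈ ([] : List R)} = (∅ : Set R) by simp, Ideal.span_empty]
    have hz : ∀ k, 1 ≤ k → w k = 0 := by
      intro k hk
      have h2 := hw k
      rw [hspan, ← Ideal.zero_eq_bot, zero_pow (by omega), Ideal.zero_eq_bot,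
        Submodule.bot_smul] at h2
      simpa using h2
    cases n with
    | zero => simp
    | succ m =>
      have : ∑ k ∈ Finset.range (m + 1), w k = w 0 := by
        rw [Finset.sum_range_succ']
        simp [fun k => hz (k + 1) (by omega)]
      rw [this, sub_self]
      exact Submodule.zero_mem _
  | cons c s' ih =>
    set B := Ideal.span {y : R | y ∈ s'} with hB
    have hJ : Ideal.span {y : R | y ∈ c :: s'} = Ideal.span {c} ⊔ B := by
      rw [show {y : R | y ∈ c :: s'} = insert c {y : R | y ∈ s'} by ext; simp,
        Ideal.span_insert]
    set G := Ideal.span {c} ⊔ B with hG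
    have hcG : c ∈ G := le_sup_left (α := Ideal R) (Ideal.subset_span rfl)
    have hBG : B ≤ G := le_sup_right
    rw [hJ] at hw ⊢
    -- decompose each w n
    have hdec := fun n => decomp c B n (w n) (hw n)
    choose v hvm hvz hvs using hdec
    -- inner sums
    have hinner : ∀ k, ∃ S : N, ∀ m, S - ∑ j ∈ Finset.range m, v (k + j) k ∈
        ((B : Ideal R) ^ m • ⊤ : Submodule R N) := by
      intro k
      have := ih (fun c' hc' => hs c' (List.mem_cons_of_mem _ hc')) (fun j => v (k + j) k)
        (fun j => by simpa [Nat.add_sub_cancel_left] using hvm (k + j) k)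
      exact this
    choose S hS using hinner
    obtain ⟨a, ha⟩ := hs c List.mem_cons_self S
    -- geometric identity
    have hgeo : ∀ m, a 0 - ∑ k ∈ Finset.range m, c ^ k • S k = c ^ m • a m := by
      intro m
      induction m with
      | zero => simp
      | succ m ihm =>
        rw [Finset.sum_range_succ, ← sub_sub, ihm, ha m, smul_add, add_sub_cancel_left,
          smul_smul, ← pow_succ]
    -- swap the double sum
    have hswap : ∀ NN, ∑ n ∈ Finset.range NN, w n =
        ∑ k ∈ Finset.range NN, c ^ k • ∑ n ∈ Finset.Ico k NN, v n k := by
      intro NN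
      have h1 : ∑ n ∈ Finset.range NN, w n =
          ∑ n ∈ Finset.Ico 0 NN, ∑ k ∈ Finset.Ico 0 (n + 1), c ^ k • v n k := by
        rw [← Finset.range_eq_Ico]
        exact Finset.sum_congr rfl fun n _ => by rw [hvs n, Finset.range_eq_Ico]
      rw [h1, ← Finset.sum_Ico_Ico_comm, ← Finset.range_eq_Ico]
      exact Finset.sum_congr rfl fun k _ => by rw [Finset.smul_sum]
    refine ⟨a 0, fun NN => ?_⟩
    have hsplit : a 0 - ∑ n ∈ Finset.range NN, w n =
        c ^ NN • a NN + ∑ k ∈ Finset.range NN,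
          c ^ k • (S k - ∑ n ∈ Finset.Ico k NN, v n k) := by
      calc a 0 - ∑ n ∈ Finset.range NN, w n
          = (a 0 - ∑ k ∈ Finset.range NN, c ^ k • S k) +
            (∑ k ∈ Finset.range NN, c ^ k • S k -
              ∑ k ∈ Finset.range NN, c ^ k • ∑ n ∈ Finset.Ico k NN, v n k) := by
            rw [hswap NN]; abel
        _ = c ^ NN • a NN + ∑ k ∈ Finset.range NN,
              c ^ k • (S k - ∑ n ∈ Finset.Ico k NN, v n k) := by
            rw [hgeo NN, ← Finset.sum_sub_distrib]
            simp_rw [smul_sub]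
    rw [hsplit]
    refine Submodule.add_mem _ ?_ (Submodule.sum_mem _ fun k hk => ?_)
    · exact Submodule.smul_mem_smul (Ideal.pow_mem_pow hcG NN) Submodule.mem_top
    · have hk' : k ≤ NN := le_of_lt (Finset.mem_range.mp hk)
      have hmem : S k - ∑ n ∈ Finset.Ico k NN, v n k ∈ (B ^ (NN - k) • ⊤ : Submodule R N) := by
        have h2 := hS k (NN - k)
        rw [Finset.sum_Ico_eq_sum_range]
        simpa [Nat.add_comm] using h2
      have hmem2 : c ^ k • (S k - ∑ n ∈ Finset.Ico k NN, v n k) ∈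
          (G ^ k • (G ^ (NN - k) • ⊤) : Submodule R N) :=
        Submodule.smul_mem_smul (Ideal.pow_mem_pow hcG k)
          (Submodule.smul_mono_left (Ideal.pow_right_mono hBG _) hmem)
      rwa [← Submodule.smul_assoc, Ideal.smul_eq_mul, ← pow_add,
        Nat.add_sub_cancel' hk'] at hmem2


theorem isPrecomplete_of_fg (hI : I.FG) (hcs : ∀ c ∈ I, CanSum c N) :
    IsPrecomplete I N := by
  obtain ⟨s, hs⟩ := hI
  constructor
  intro b hb
  set w : ℕ → N := fun n => b (n + 1) - b n with hwdef
  have hIs : Ideal.span {y : R | y ∈ s.toList} = I := by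
    rw [show {y : R | y ∈ s.toList} = (↑s : Set R) by ext y; simp, hs]
  have hw : ∀ n, w n ∈ ((Ideal.span {y : R | y ∈ s.toList}) ^ n • ⊤ : Submodule R N) := by
    intro n
    rw [hIs]
    have := SModEq.sub_mem.mp (hb (Nat.le_succ n))
    simpa [hwdef] using neg_mem this
  obtain ⟨t, ht⟩ := exists_limit_of_list s.toList
    (fun c hc => hcs c (by rw [← hs]; exact Ideal.subset_span (by simpa using hc))) w hw
  refine ⟨t + b 0, fun n => ?_⟩
  rw [SModEq.sub_mem]
  have h2 := ht n
  rw [hIs] at h2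
  have h3 : ∑ k ∈ Finset.range n, w k = b n - b 0 := Finset.sum_range_sub b n
  rw [h3] at h2
  simpa [sub_sub, add_comm] using neg_mem h2

theorem isHausdorff_of_injective {T F : Type*} [AddCommGroup T] [Module R T]
    [AddCommGroup F] [Module R F] [IsHausdorff I F] (f : T →ₗ[R] F)
    (hf : Function.Injective f) : IsHausdorff I T := by
  constructor
  intro t ht
  have : f t = 0 := by
    refine IsHausdorff.haus ‹IsHausdorff I F› (f t) fun n => ?_
    rw [SModEq.zero]
    have h1 : t ∈ (I ^ n • ⊤ : Submodule R T) := by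
      have := ht n; rwa [SModEq.zero] at this
    have h2 : f t ∈ Submodule.map f (I ^ n • ⊤ : Submodule R T) :=
      Submodule.mem_map_of_mem h1
    rw [Submodule.map_smul''] at h2
    exact Submodule.smul_mono_left le_rfl (Submodule.smul_mono le_rfl le_top h2)
  exact hf (by rw [this, map_zero])

theorem isPrecomplete_quotient [IsPrecomplete I N] (U : Submodule R N) :
    IsPrecomplete I (N ⧸ U) := by
  constructor
  intro b hb
  have hmap : ∀ n, (I ^ n • ⊤ : Submodule R (N ⧸ U)) =
      Submodule.map U.mkQ (I ^ n • ⊤ : Submodule R N) := by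
    intro n
    rw [Submodule.map_smul'', Submodule.map_top, Submodule.range_mkQ]
  have hdiff : ∀ n, b (n + 1) - b n ∈ (I ^ n • ⊤ : Submodule R (N ⧸ U)) := by
    intro n
    simpa using neg_mem (SModEq.sub_mem.mp (hb (Nat.le_succ n)))
  have : ∀ n, ∃ cc : N, cc ∈ (I ^ n • ⊤ : Submodule R N) ∧ U.mkQ cc = b (n + 1) - b n := by
    intro n
    have h2 := hdiff n
    rw [hmap n] at h2
    obtain ⟨cc, hcc, hcc2⟩ := h2
    exact ⟨cc, hcc, hcc2⟩
  choose cc hccmem hccval using this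
  obtain ⟨b0, hb0⟩ := U.mkQ_surjective (b 0)
  set tseq : ℕ → N := fun n => b0 + ∑ k ∈ Finset.range n, cc k with htseq
  have htc : ∀ {m n : ℕ}, m ≤ n → tseq m ≡ tseq n [SMOD (I ^ m • ⊤ : Submodule R N)] := by
    intro m n h
    rw [SModEq.sub_mem]
    have : tseq m - tseq n = -∑ k ∈ Finset.Ico m n, cc k := by
      rw [htseq]
      simp only
      rw [Finset.sum_Ico_eq_sub _ h]
      abel
    rw [this]
    exact neg_mem (Submodule.sum_mem _ fun k hk =>
      Submodule.smul_mono_left (Ideal.pow_le_pow_right (Finset.mem_Ico.mp hk).1) (hccmem k))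
  obtain ⟨L, hL⟩ := IsPrecomplete.prec ‹IsPrecomplete I N› htc
  refine ⟨U.mkQ L, fun n => ?_⟩
  rw [SModEq.sub_mem]
  have h1 : U.mkQ (tseq n) = b n := by
    rw [htseq]
    simp only [map_add, map_sum]
    rw [hb0]
    have : ∀ k ∈ Finset.range n, U.mkQ (cc k) = b (k + 1) - b k :=
      fun k _ => hccval k
    rw [Finset.sum_congr rfl this, Finset.sum_range_sub b n]
    abel
  have h2 : tseq n - L ∈ (I ^ n • ⊤ : Submodule R N) := SModEq.sub_mem.mp (hL n)
  have h3 : U.mkQ (tseq n - L) ∈ (I ^ n • ⊤ : Submodule R (N ⧸ U)) := by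
    rw [hmap n]
    exact Submodule.mem_map_of_mem h2
  rw [map_sub, h1] at h3
  exact h3


/-- For a flat module, scalar cancellation into colon ideals. -/
theorem flat_colon {F : Type*} [AddCommGroup F] [Module R F] [Module.Flat R F]
    (J : Ideal R) (c : R) {v : F} (h : c • v ∈ (J • ⊤ : Submodule R F)) :
    v ∈ ((J.colon (Ideal.span {c})) • ⊤ : Submodule R F) := by
  set K : Ideal R := J.colon (Ideal.span {c}) with hK
  -- the map R/K → R/J given by multiplication by c is injective
  have hle : K ≤ Submodule.comap (c • (LinearMap.id : R →ₗ[R] R)) J := by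
    intro r hr
    simp only [Submodule.mem_comap, LinearMap.smul_apply, LinearMap.id_coe, id_eq, smul_eq_mul]
    have := Submodule.mem_colon.mp hr c (Ideal.subset_span rfl)
    rwa [smul_eq_mul, mul_comm] at this
  set φ : (R ⧸ K) →ₗ[R] (R ⧸ J) := Submodule.mapQ K J (c • LinearMap.id) hle with hφ
  have hφ_apply : ∀ r : R, φ (Submodule.Quotient.mk r) = Submodule.Quotient.mk (c * r) := by
    intro r
    rw [hφ, Submodule.mapQ_apply]
    simp [smul_eq_mul]
  have hφinj : Function.Injective φ := by
    rw [← LinearMap.ker_eq_bot]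
    refine (Submodule.eq_bot_iff _).mpr fun q hq => ?_
    obtain ⟨r, rfl⟩ := Submodule.Quotient.mk_surjective K q
    rw [LinearMap.mem_ker, hφ_apply] at hq
    have hcr : c * r ∈ J := (Submodule.Quotient.mk_eq_zero J).mp hq
    have hrK : r ∈ K := by
      rw [hK]
      refine Submodule.mem_colon.mpr fun p hp => ?_
      obtain ⟨γ, rfl⟩ := Ideal.mem_span_singleton'.mp hp
      rw [smul_eq_mul, show r * (γ * c) = γ * (c * r) by ring]
      exact Ideal.mul_mem_left _ _ hcr
    rwa [Submodule.Quotient.mk_eq_zero]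
  have hinj2 : Function.Injective (φ.lTensor F) :=
    Module.Flat.lTensor_preserves_injective_linearMap φ hφinj
  -- transfer through the equivalences
  set eK := TensorProduct.tensorQuotEquivQuotSMul F K
  set eJ := TensorProduct.tensorQuotEquivQuotSMul F J
  have hz : φ.lTensor F (v ⊗ₜ[R] (Submodule.Quotient.mk 1)) = 0 := by
    apply eJ.injective
    rw [map_zero, LinearMap.lTensor_tmul, hφ_apply, mul_one]
    have : eJ (v ⊗ₜ[R] (Ideal.Quotient.mk J c)) = Submodule.Quotient.mk (c • v) :=
      TensorProduct.tensorQuotEquivQuotSMul_tmul_mk J v c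
    rw [show (Submodule.Quotient.mk (c : R) : R ⧸ J) = Ideal.Quotient.mk J c from rfl, this,
      Submodule.Quotient.mk_eq_zero]
    exact h
  have hz2 : (v ⊗ₜ[R] (Submodule.Quotient.mk 1) : F ⊗[R] (R ⧸ K)) = 0 := hinj2 (by simpa using hz)
  have : eK (v ⊗ₜ[R] (Ideal.Quotient.mk K 1)) = Submodule.Quotient.mk ((1 : R) • v) :=
    TensorProduct.tensorQuotEquivQuotSMul_tmul_mk K v 1
  rw [show (Ideal.Quotient.mk K 1 : R ⧸ K) = Submodule.Quotient.mk 1 from rfl, hz2, map_zero] at this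
  rw [← Submodule.Quotient.mk_eq_zero]
  rw [one_smul] at this
  exact this.symm


/-- Artin-Rees type colon bound: for `x` a nonzerodivisor there is `k` with
`(I^(n+k) : x) ≤ I^n` for all `n`. -/
theorem colon_pow_le [IsNoetherianRing R] (I : Ideal R) {x : R} (hxR : IsSMulRegular R x) :
    ∃ k : ℕ, ∀ n : ℕ, (I ^ (n + k)).colon (Ideal.span {x}) ≤ I ^ n := by
  obtain ⟨k, hk⟩ := Ideal.exists_pow_inf_eq_pow_smul I (Ideal.span {x} : Ideal R)
  refine ⟨k, fun n r hr => ?_⟩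
  have hrx : r * x ∈ I ^ (n + k) := by
    have := Submodule.mem_colon.mp hr x (Ideal.subset_span rfl)
    rwa [smul_eq_mul] at this
  have hmem : r * x ∈ (I ^ (n + k) • ⊤ ⊓ Ideal.span {x} : Ideal R) := by
    constructor
    · rw [Ideal.smul_eq_mul, Ideal.mul_top]
      exact hrx
    · exact Ideal.mem_span_singleton'.mpr ⟨r, rfl⟩
  rw [hk (n + k) (by omega)] at hmem
  have hle : (I ^ (n + k - k) • (I ^ k • ⊤ ⊓ Ideal.span {x}) : Ideal R) ≤
      I ^ n • Ideal.span {x} := by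
    rw [show n + k - k = n by omega]
    exact Submodule.smul_mono le_rfl inf_le_right
  have hmem2 : r * x ∈ (I ^ n • Ideal.span {x} : Ideal R) := hle hmem
  rw [Ideal.smul_eq_mul, mul_comm] at hmem2
  obtain ⟨z, hz, hzx⟩ := Submodule.mem_span_singleton_mul.mp hmem2
  have : x • z = x • r := by rw [smul_eq_mul, smul_eq_mul, hzx, mul_comm]
  rwa [← hxR this]

theorem smul_cancel_pow [IsNoetherianRing R] (I : Ideal R) {x : R} (hxR : IsSMulRegular R x)
    {F : Type*} [AddCommGroup F] [Module R F] [Module.Flat R F] :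
    ∃ k : ℕ, ∀ n : ℕ, ∀ v : F, x • v ∈ (I ^ (n + k) • ⊤ : Submodule R F) →
      v ∈ (I ^ n • ⊤ : Submodule R F) := by
  obtain ⟨k, hk⟩ := colon_pow_le I hxR
  refine ⟨k, fun n v hv => ?_⟩
  have := flat_colon (I ^ (n + k)) x hv
  exact Submodule.smul_mono_left (hk n) this

/-- Key closedness: in a complete flat module, `xF` is closed in the `I`-adic topology. -/
theorem mem_smul_top_of_forall [IsNoetherianRing R] (I : Ideal R)
    {F : Type*} [AddCommGroup F] [Module R F] [Module.Flat R F] [IsAdicComplete I F]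
    {x : R} (hxR : IsSMulRegular R x) (y : F)
    (hy : ∀ n, y ∈ (x • ⊤ ⊔ I ^ n • ⊤ : Submodule R F)) :
    y ∈ (x • ⊤ : Submodule R F) := by
  obtain ⟨k, hk⟩ := smul_cancel_pow I hxR (F := F)
  -- choose decompositions
  have : ∀ n, ∃ a : F, ∃ z ∈ (I ^ n • ⊤ : Submodule R F), y = x • a + z := by
    intro n
    obtain ⟨u, hu, z, hz, huz⟩ := Submodule.mem_sup.mp (hy n)
    obtain ⟨a, _, ha⟩ := Set.mem_smul_set.mp hu
    exact ⟨a, z, hz, by rw [← huz, ha]⟩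
  choose a z hz hyz using this
  have hdiff : ∀ n, a (n + k) - a (n + k + 1) ∈ (I ^ n • ⊤ : Submodule R F) := by
    intro n
    refine hk n _ ?_
    have : x • (a (n + k) - a (n + k + 1)) = z (n + k + 1) - z (n + k) := by
      have h1 := hyz (n + k)
      have h2 := hyz (n + k + 1)
      rw [smul_sub]
      have : x • a (n + k) + z (n + k) = x • a (n + k + 1) + z (n + k + 1) := by
        rw [← h1, ← h2]
      linear_combination (norm := abel) this
    rw [this]
    exact sub_mem (Submodule.smul_mono_left (Ideal.pow_le_pow_right (by omega)) (hz (n + k + 1)))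
      (Submodule.smul_mono_left (Ideal.pow_le_pow_right (by omega)) (hz (n + k)))
  -- the sequence n ↦ a (n + k) is Cauchy
  have hcauchy : ∀ {m n : ℕ}, m ≤ n →
      a (m + k) ≡ a (n + k) [SMOD (I ^ m • ⊤ : Submodule R F)] := by
    intro m n h
    rw [SModEq.sub_mem]
    induction n with
    | zero =>
      rw [show m = 0 by omega]
      simp
    | succ n ihn =>
      rcases Nat.lt_or_ge m (n + 1) with hlt | hge
      · have h1 := ihn (by omega)
        have h2 : a (n + k) - a (n + k + 1) ∈ (I ^ m • ⊤ : Submodule R F) :=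
          Submodule.smul_mono_left (Ideal.pow_le_pow_right (by omega)) (hdiff n)
        have h3 := add_mem h1 h2
        rw [sub_add_sub_cancel] at h3
        rwa [show n + 1 + k = n + k + 1 by omega]
      · rw [show m = n + 1 by omega]
        simp
  obtain ⟨L, hL⟩ := IsPrecomplete.prec (IsAdicComplete.toIsPrecomplete (I := I) (M := F)) hcauchy
  have hyL : y - x • L = 0 := by
    refine IsHausdorff.haus (IsAdicComplete.toIsHausdorff (I := I) (M := F)) _ fun n => ?_
    rw [SModEq.zero]
    have h1 : a (n + k) - L ∈ (I ^ n • ⊤ : Submodule R F) := SModEq.sub_mem.mp (hL n)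
    have h2 : y - x • L = x • (a (n + k) - L) + z (n + k) := by
      rw [smul_sub, hyz (n + k)]
      abel
    rw [h2]
    exact add_mem (Submodule.smul_mem _ x h1)
      (Submodule.smul_mono_left (Ideal.pow_le_pow_right (by omega)) (hz (n + k)))
  have : y = x • L := by rwa [sub_eq_zero] at hyL
  rw [this]
  exact Submodule.smul_mem_pointwise_smul L x ⊤ Submodule.mem_top


end CompleteSyzygyAux

/-- Let `(R,𝔪)` be a Noetherian local ring, `M` a complete `R`-module, and `x ∈ 𝔪` a
nonzerodivisor on both `R` and `M`. Given a short exact sequence `0 → T → F → M → 0`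
with `F` a complete flat `R`-module, both `T` and `T/xT` are complete. -/
theorem complete_syzygy (R : Type u) [CommRing R] [IsNoetherianRing R] [IsLocalRing R]
    (M : Type u) [AddCommGroup M] [Module R M] [IsAdicComplete (maximalIdeal R) M]
    (x : R) (hx : x ∈ maximalIdeal R) (hxR : IsSMulRegular R x) (hxM : IsSMulRegular M x)
    (T F : Type u) [AddCommGroup T] [Module R T] [AddCommGroup F] [Module R F]
    [Module.Flat R F] [IsAdicComplete (maximalIdeal R) F]
    (f : T →ₗ[R] F) (g : F →ₗ[R] M)
    (hf : Function.Injective f) (hg : Function.Surjective g) (hfg : Function.Exact f g) :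
    IsAdicComplete (maximalIdeal R) T ∧
      IsAdicComplete (maximalIdeal R) (QuotSMulTop x T) := by
  open Pointwise in
  have hcs : ∀ c ∈ maximalIdeal R, CompleteSyzygyAux.CanSum c T := fun c hc =>
    CompleteSyzygyAux.canSum_exact (maximalIdeal R) f g hf hfg hc
      (CompleteSyzygyAux.canSum_of_complete (maximalIdeal R) hc)
  have hTpre : IsPrecomplete (maximalIdeal R) T :=
    CompleteSyzygyAux.isPrecomplete_of_fg (maximalIdeal R)
      (IsNoetherian.noetherian (maximalIdeal R)) hcs
  have hTh : IsHausdorff (maximalIdeal R) T :=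
    CompleteSyzygyAux.isHausdorff_of_injective (maximalIdeal R) f hf
  have hQpre : IsPrecomplete (maximalIdeal R) (QuotSMulTop x T) := by
    haveI := hTpre
    exact CompleteSyzygyAux.isPrecomplete_quotient (maximalIdeal R) (x • ⊤ : Submodule R T)
  have hQh : IsHausdorff (maximalIdeal R) (QuotSMulTop x T) := by
    constructor
    intro q hq
    obtain ⟨t, rfl⟩ := Submodule.Quotient.mk_surjective _ q
    have ht : ∀ n, t ∈ (x • ⊤ ⊔ (maximalIdeal R) ^ n • ⊤ : Submodule R T) := by
      intro n
      have h1 := hq n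
      rw [SModEq.zero] at h1
      have hmap : ((maximalIdeal R) ^ n • ⊤ : Submodule R (QuotSMulTop x T)) =
          Submodule.map (x • ⊤ : Submodule R T).mkQ
            ((maximalIdeal R) ^ n • ⊤ : Submodule R T) := by
        rw [Submodule.map_smul'', Submodule.map_top, Submodule.range_mkQ]
      rw [hmap] at h1
      obtain ⟨tn, htn, htn2⟩ := h1
      have hker : t - tn ∈ (x • ⊤ : Submodule R T) := by
        rw [← Submodule.ker_mkQ (x • ⊤ : Submodule R T), LinearMap.mem_ker, map_sub, htn2,
          Submodule.mkQ_apply, sub_self]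
      exact Submodule.mem_sup.mpr ⟨t - tn, hker, tn, htn, by abel⟩
    have hft : ∀ n, f t ∈ (x • ⊤ ⊔ (maximalIdeal R) ^ n • ⊤ : Submodule R F) := by
      intro n
      obtain ⟨u, hu, v, hv, huv⟩ := Submodule.mem_sup.mp (ht n)
      obtain ⟨u', _, hu'⟩ := Set.mem_smul_set.mp hu
      refine Submodule.mem_sup.mpr ⟨x • f u',
        Submodule.smul_mem_pointwise_smul _ x ⊤ Submodule.mem_top, f v, ?_, ?_⟩
      · have h2 : f v ∈ Submodule.map f ((maximalIdeal R) ^ n • ⊤ : Submodule R T) :=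
          Submodule.mem_map_of_mem hv
        rw [Submodule.map_smul''] at h2
        exact Submodule.smul_mono le_rfl le_top h2
      · rw [← map_smul, ← map_add, hu', huv]
    have hfx : f t ∈ (x • ⊤ : Submodule R F) :=
      CompleteSyzygyAux.mem_smul_top_of_forall (maximalIdeal R) hxR (f t) hft
    obtain ⟨w, _, hw⟩ := Set.mem_smul_set.mp hfx
    have hgw : g w = 0 := by
      have h3 : x • g w = 0 := by
        rw [← map_smul, hw, hfg.apply_apply_eq_zero]
      exact hxM (show x • g w = x • 0 by rw [h3, smul_zero])
    obtain ⟨t', hft'⟩ := (hfg w).mp hgw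
    have htx : t = x • t' := hf (by rw [map_smul, hft', hw])
    rw [Submodule.Quotient.mk_eq_zero, htx]
    exact Submodule.smul_mem_pointwise_smul _ x ⊤ Submodule.mem_top
  exact ⟨{ toIsHausdorff := hTh, toIsPrecomplete := hTpre },
    { toIsHausdorff := hQh, toIsPrecomplete := hQpre }⟩
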